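/- arXiv:2309.11780 — 2 statements merged into one kernel-verified Lean document; each statement's English description precedes it below -/
import Mathlib

section
/- Let F : C → D be a Krull–Schmidt functor between Krull–Schmidt categories, let A be an object of C such that F(A') is nonzero for every nonzero direct summand A' of A, and let μ : A → A be an endomorphism of A. If F(μ) is the identity morphism of F(A), then μ is an isomorphism. -/
open CategoryTheory CategoryTheory.Limits

universe v₁ v₂ u₁ u₂

attribute [local instance] CategoryTheory.Limits.hasBinaryBiproducts_of_finite_biproducts

/-- The Jacobson radical of a (possibly noncommutative) ring, as a set:
those `x` such that `1 - y * x` is a unit for every `y`. -/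
def jacobsonRadicalSet (R : Type*) [Ring R] : Set R :=
  {x | ∀ y : R, IsUnit (1 - y * x)}

variable {C : Type u₁} [Category.{v₁} C] [Preadditive C] [HasFiniteBiproducts C]
variable {D : Type u₂} [Category.{v₂} D] [Preadditive D] [HasFiniteBiproducts D]

/-- An object is indecomposable if it is nonzero and in any biproduct
decomposition one of the two factors is zero. -/
def IsIndecomposable (X : C) : Prop :=
  ¬ IsZero X ∧ ∀ Y Z : C, Nonempty (X ≅ Y ⊞ Z) → IsZero Y ∨ IsZero Z

/-- `A'` is a direct summand of `A`. -/
def IsSummand (A A' : C) : Prop :=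
  ∃ A'' : C, Nonempty (A ≅ A' ⊞ A'')

/-- A Krull–Schmidt category: every object is isomorphic to a finite biproduct of
indecomposable objects, each having a local endomorphism ring. -/
def IsKrullSchmidtCat (C : Type u₁) [Category.{v₁} C] [Preadditive C]
    [HasFiniteBiproducts C] : Prop :=
  ∀ A : C, ∃ (n : ℕ) (X : Fin n → C),
    (∀ i, IsIndecomposable (X i) ∧ IsLocalRing (End (X i))) ∧ Nonempty (A ≅ ⨁ X)

/-- A Krull–Schmidt functor: for every indecomposable object `A`, the induced map
`End A → End (F A)` sends the Jacobson radical into the Jacobson radical. -/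
def IsKrullSchmidtFunctor (F : C ⥤ D) : Prop :=
  ∀ A : C, IsIndecomposable A →
    ∀ μ : End A, μ ∈ jacobsonRadicalSet (End A) →
      (F.map μ : End (F.obj A)) ∈ jacobsonRadicalSet (End (F.obj A))


/-- Split off the first summand of a biproduct over `Fin (n+1)`. -/
noncomputable def binFin {n : ℕ} (X : Fin (n+1) → C) :
    (⨁ X) ≅ X 0 ⊞ ⨁ (fun i : Fin n => X i.succ) where
  hom := biprod.lift (biproduct.π X 0) (biproduct.lift fun i => biproduct.π X i.succ)
  inv := biprod.desc (biproduct.ι X 0) (biproduct.desc fun i => biproduct.ι X i.succ)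
  hom_inv_id := by
    rw [biprod.lift_desc, biproduct.lift_desc, ← biproduct.total, Fin.sum_univ_succ]
  inv_hom_id := by
    ext
    · simp
    · simp [biproduct.ι_π, Fin.succ_ne_zero, ne_comm, (Fin.succ_ne_zero _).symm]
    · simp [biproduct.ι_π, Fin.succ_ne_zero]
    · simp [biproduct.ι_π, Fin.succ_inj]

theorem isSummand_trans' {A B A' : C} (h1 : IsSummand A B) (h2 : IsSummand B A') :
    IsSummand A A' := by
  obtain ⟨Q, ⟨e1⟩⟩ := h1
  obtain ⟨A'', ⟨e2⟩⟩ := h2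
  exact ⟨A'' ⊞ Q, ⟨e1 ≪≫ biprod.mapIso e2 (Iso.refl Q) ≪≫ biprod.associator _ _ _⟩⟩

/-- Gaussian elimination: a 2×2 matrix with invertible upper-left entry and invertible
Schur complement is invertible. -/
theorem gauss_isIso {X₁ X₂ : C} (a : X₁ ⟶ X₁) (b : X₁ ⟶ X₂) (c : X₂ ⟶ X₁) (d : X₂ ⟶ X₂)
    [IsIso a] [IsIso (d - c ≫ inv a ≫ b)] : IsIso (Biprod.ofComponents a b c d) := by
  have w : (Biprod.unipotentLower (-c ≫ inv a)).hom ≫ Biprod.ofComponents a b c d ≫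
      (Biprod.unipotentUpper (-inv a ≫ b)).hom = biprod.map a (d - c ≫ inv a ≫ b) := by
    ext <;> simp
    abel
  have h : Biprod.ofComponents a b c d =
      (Biprod.unipotentLower (-c ≫ inv a)).inv ≫ biprod.map a (d - c ≫ inv a ≫ b) ≫
        (Biprod.unipotentUpper (-inv a ≫ b)).inv := by
    rw [← w]
    simp
  rw [h]
  haveI : IsIso (biprod.map a (d - c ≫ inv a ≫ b)) := by
    have h2 : biprod.map a (d - c ≫ inv a ≫ b) =
        (biprod.mapIso (asIso a) (asIso (d - c ≫ inv a ≫ b))).hom := rfl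
    rw [h2]
    infer_instance
  infer_instance

set_option maxHeartbeats 1000000 in
theorem key_aux (F : C ⥤ D) [F.Additive] (n : ℕ) :
    ∀ (X : Fin n → C), (∀ i, IsLocalRing (End (X i))) → (∀ i, ¬ IsZero (X i)) →
    ∀ (B : C), (B ≅ ⨁ X) → ∀ (μ : B ⟶ B),
      (∀ A' : C, IsSummand B A' → ¬ IsZero A' → ¬ IsZero (F.obj A')) →
      F.map μ = 𝟙 (F.obj B) → IsIso μ := by
  induction n with
  | zero =>
    intro X _ _ B eB μ _ _
    have hz : IsZero B := by
      refine (IsZero.iff_id_eq_zero B).mpr ?_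
      have h0 : 𝟙 (⨁ X) = 0 := by
        apply biproduct.hom_ext; intro j; exact j.elim0
      calc 𝟙 B = eB.hom ≫ 𝟙 (⨁ X) ≫ eB.inv := by simp
        _ = 0 := by rw [h0]; simp
    rw [hz.eq_of_src μ (𝟙 B)]
    infer_instance
  | succ n ih =>
    intro X hloc hnz B eB μ hdense hμ
    obtain ⟨e⟩ : Nonempty (B ≅ X 0 ⊞ ⨁ (fun i : Fin n => X i.succ)) := ⟨eB ≪≫ binFin X⟩
    set μ' : X 0 ⊞ ⨁ (fun i : Fin n => X i.succ) ⟶ X 0 ⊞ ⨁ (fun i : Fin n => X i.succ) :=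
      e.inv ≫ μ ≫ e.hom with hμ'def
    suffices h : IsIso μ' by
      have hμeq : μ = e.hom ≫ μ' ≫ e.inv := by rw [hμ'def]; simp
      rw [hμeq]; infer_instance
    have hFμ' : F.map μ' = 𝟙 (F.obj (X 0 ⊞ ⨁ (fun i : Fin n => X i.succ))) := by
      rw [hμ'def, F.map_comp, F.map_comp, hμ, Category.id_comp, ← F.map_comp, e.inv_hom_id,
        F.map_id]
    have hFa : F.map (biprod.inl ≫ μ' ≫ biprod.fst) = 𝟙 (F.obj (X 0)) := by
      rw [F.map_comp, F.map_comp, hFμ', Category.id_comp, ← F.map_comp, biprod.inl_fst, F.map_id]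
    haveI := hloc 0
    rcases IsLocalRing.isUnit_or_isUnit_of_add_one
        (a := (show End (X 0) from biprod.inl ≫ μ' ≫ biprod.fst))
        (b := 1 - (show End (X 0) from biprod.inl ≫ μ' ≫ biprod.fst))
        (by rw [add_sub_cancel]) with hu | hu
    · -- the diagonal entry is invertible: Gaussian elimination
      haveI hIa : IsIso (biprod.inl ≫ μ' ≫ biprod.fst) := by
        obtain ⟨u, hu'⟩ := hu
        refine ⟨⟨u.inv, ?_, ?_⟩⟩
        · have h' := u.inv_val
          rw [hu'] at h'
          exact h'
        · have h' := u.val_inv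
          rw [hu'] at h'
          exact h'
      have hFd : F.map (biprod.inr ≫ μ' ≫ biprod.snd) =
          𝟙 (F.obj (⨁ (fun i : Fin n => X i.succ))) := by
        rw [F.map_comp, F.map_comp, hFμ', Category.id_comp, ← F.map_comp, biprod.inr_snd,
          F.map_id]
      have hFc : F.map (biprod.inr ≫ μ' ≫ biprod.fst) = 0 := by
        rw [F.map_comp, F.map_comp, hFμ', Category.id_comp, ← F.map_comp, biprod.inr_fst,
          F.map_zero]
      have hFg : F.map ((biprod.inr ≫ μ' ≫ biprod.snd) -
          (biprod.inr ≫ μ' ≫ biprod.fst) ≫ inv (biprod.inl ≫ μ' ≫ biprod.fst) ≫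
            (biprod.inl ≫ μ' ≫ biprod.snd)) = 𝟙 (F.obj (⨁ (fun i : Fin n => X i.succ))) := by
        rw [F.map_sub, hFd, F.map_comp, hFc, zero_comp, sub_zero]
      have hsummand : IsSummand B (⨁ (fun i : Fin n => X i.succ)) :=
        ⟨X 0, ⟨e ≪≫ biprod.braiding _ _⟩⟩
      haveI hgiso : IsIso ((biprod.inr ≫ μ' ≫ biprod.snd) -
          (biprod.inr ≫ μ' ≫ biprod.fst) ≫ inv (biprod.inl ≫ μ' ≫ biprod.fst) ≫
            (biprod.inl ≫ μ' ≫ biprod.snd)) :=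
        ih (fun i => X i.succ) (fun i => hloc i.succ) (fun i => hnz i.succ) _ (Iso.refl _) _
          (fun A' hs hz => hdense A' (isSummand_trans' hsummand hs) hz) hFg
      have hoc := gauss_isIso (biprod.inl ≫ μ' ≫ biprod.fst) (biprod.inl ≫ μ' ≫ biprod.snd)
        (biprod.inr ≫ μ' ≫ biprod.fst) (biprod.inr ≫ μ' ≫ biprod.snd)
      rw [Biprod.ofComponents_eq μ'] at hoc
      exact hoc
    · -- `1 - a` is a unit: contradiction with `hdense`
      haveI hiso : IsIso (𝟙 (X 0) - (biprod.inl ≫ μ' ≫ biprod.fst)) := by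
        obtain ⟨u, hu'⟩ := hu
        refine ⟨⟨u.inv, ?_, ?_⟩⟩
        · have h' := u.inv_val
          rw [hu'] at h'
          exact h'
        · have h' := u.val_inv
          rw [hu'] at h'
          exact h'
      have hF0 : F.map (𝟙 (X 0) - (biprod.inl ≫ μ' ≫ biprod.fst)) = 0 := by
        rw [F.map_sub, hFa, F.map_id, sub_self]
      have hzero : IsZero (F.obj (X 0)) := by
        have h1 : 𝟙 (F.obj (X 0)) = 0 := by
          simpa using congrArg
            (fun z => z ≫ inv (F.map (𝟙 (X 0) - (biprod.inl ≫ μ' ≫ biprod.fst)))) hF0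
        exact (IsZero.iff_id_eq_zero _).mpr h1
      exact absurd hzero (hdense (X 0) ⟨⨁ (fun i : Fin n => X i.succ), ⟨e⟩⟩ (hnz 0))

/-- If `F` is a Krull–Schmidt functor between Krull–Schmidt categories, `A` is an object
all of whose nonzero direct summands have nonzero image under `F`, and `μ : A ⟶ A` is an
endomorphism with `F.map μ` the identity, then `μ` is an isomorphism. -/
theorem statement0
    (hC : IsKrullSchmidtCat C) (hD : IsKrullSchmidtCat D)
    (F : C ⥤ D) [F.Additive] (hF : IsKrullSchmidtFunctor F)
    (A : C)
    (hdense : ∀ A' : C, IsSummand A A' → ¬ IsZero A' → ¬ IsZero (F.obj A'))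
    (μ : A ⟶ A) (hμ : F.map μ = 𝟙 (F.obj A)) :
    IsIso μ := by
  obtain ⟨n, X, hX, ⟨eA⟩⟩ := hC A
  exact key_aux F n X (fun i => (hX i).2) (fun i => (hX i).1.1) A eA μ hdense hμ
end

section
/- Let F : C → D be a Krull–Schmidt functor between Krull–Schmidt categories. Then every object A of C admits a direct sum decomposition A ≅ A_F ⊕ A_0 such that A_F is F-dense and F sends every indecomposable direct summand of A_0 to a zero object (so A_F is a maximal F-dense summand of A). Moreover the isomorphism class of A_F is uniquely determined by A (the decomposition is unique up to non-unique isomorphism). -/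
open CategoryTheory CategoryTheory.Limits

universe v₁ v₂ u₁ u₂

attribute [local instance] CategoryTheory.Limits.hasBinaryBiproducts_of_finite_biproducts

variable {C : Type u₁} [Category.{v₁} C] [Preadditive C] [HasFiniteBiproducts C]
variable {D : Type u₂} [Category.{v₂} D] [Preadditive D] [HasFiniteBiproducts D]

/-- An object `A` is `F`-dense if `F` sends every nonzero direct summand of `A`
to a nonzero object. -/
def IsFDense (F : C ⥤ D) (A : C) : Prop :=
  ∀ A' : C, IsSummand A A' → ¬ IsZero A' → ¬ IsZero (F.obj A')

namespace KSaux

section RingLemmas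

variable {R : Type*} [Ring R] [IsLocalRing R]

lemma unitPair {a b : R} (h : a * b = 1) : IsUnit a ∧ IsUnit b := by
  have hidem : (b * a) * (b * a) = b * a := by
    calc (b * a) * (b * a) = b * (a * b) * a := by noncomm_ring
    _ = b * a := by rw [h]; noncomm_ring
  have hba : b * a = 1 := by
    have he : b * a + (1 - b * a) = 1 := by noncomm_ring
    rcases IsLocalRing.isUnit_or_isUnit_of_add_one he with hu | hu
    · obtain ⟨u, hu⟩ := hu
      have h2 : (↑u⁻¹ * (b * a)) * (b * a) = ↑u⁻¹ * (b * a) := by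
        rw [mul_assoc, hidem]
      rw [← hu, u.inv_mul, one_mul] at h2; rw [hu] at h2; exact h2
    · obtain ⟨v, hv⟩ := hu
      have h0 : (1 - b * a) * (b * a) = 0 := by
        rw [sub_mul, one_mul, hidem, sub_self]
      have hba0 : b * a = 0 := by
        have h3 := congrArg (fun x => (↑v⁻¹ : R) * x) h0
        simp only [mul_zero] at h3
        rwa [← hv, ← mul_assoc, v.inv_mul, one_mul] at h3
      exfalso
      have h4 : (1 : R) = 0 := by
        calc (1 : R) = (a * b) * (a * b) := by rw [h, one_mul]
        _ = a * (b * a) * b := by noncomm_ring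
        _ = 0 := by rw [hba0]; noncomm_ring
      exact one_ne_zero h4
  exact ⟨⟨⟨a, b, h, hba⟩, rfl⟩, ⟨⟨b, a, hba, h⟩, rfl⟩⟩

lemma isUnit_of_isUnit_mul {a b : R} (h : IsUnit (a * b)) : IsUnit a ∧ IsUnit b := by
  obtain ⟨u, hu⟩ := h
  constructor
  · have h1 : a * (b * ↑u⁻¹) = 1 := by rw [← mul_assoc, ← hu, u.mul_inv]
    exact (unitPair h1).1
  · have h1 : (↑u⁻¹ * a) * b = 1 := by rw [mul_assoc, ← hu, u.inv_mul]
    exact (unitPair h1).2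

lemma isUnit_add_split {a b : R} (h : IsUnit (a + b)) : IsUnit a ∨ IsUnit b := by
  obtain ⟨u, hu⟩ := h
  have h1 : a * ↑u⁻¹ + b * ↑u⁻¹ = 1 := by rw [← add_mul, ← hu, u.mul_inv]
  rcases IsLocalRing.isUnit_or_isUnit_of_add_one h1 with hu' | hu'
  · exact Or.inl (isUnit_of_isUnit_mul hu').1
  · exact Or.inr (isUnit_of_isUnit_mul hu').1

lemma isUnit_sum {ι : Type*} (s : Finset ι) (f : ι → R) (h : IsUnit (∑ i ∈ s, f i)) :
    ∃ i ∈ s, IsUnit (f i) := by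
  classical
  induction s using Finset.induction_on with
  | empty =>
      rw [Finset.sum_empty] at h
      exact absurd h not_isUnit_zero
  | insert _ _ hx ih =>
      rw [Finset.sum_insert hx] at h
      rcases isUnit_add_split h with h1 | h2
      · exact ⟨_, Finset.mem_insert_self _ _, h1⟩
      · obtain ⟨i, hi, hu⟩ := ih h2
        exact ⟨i, Finset.mem_insert_of_mem hi, hu⟩

lemma idem {e : R} (h : e * e = e) : e = 0 ∨ e = 1 := by
  have he : e + (1 - e) = 1 := by noncomm_ring
  rcases IsLocalRing.isUnit_or_isUnit_of_add_one he with hu | hu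
  · right
    obtain ⟨u, hu⟩ := hu
    have h2 : (↑u⁻¹ * e) * e = ↑u⁻¹ * e := by rw [mul_assoc, h]
    rw [← hu, u.inv_mul, one_mul] at h2; rw [hu] at h2; exact h2
  · left
    obtain ⟨v, hv⟩ := hu
    have h0 : (1 - e) * e = 0 := by rw [sub_mul, one_mul, h, sub_self]
    have h3 := congrArg (fun x => (↑v⁻¹ : R) * x) h0
    simp only [mul_zero] at h3
    rwa [← hv, ← mul_assoc, v.inv_mul, one_mul] at h3

lemma isUnit_add_of_nonunit {a u : R} (hu : IsUnit u) (ha : ¬ IsUnit a) : IsUnit (a + u) := by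
  rcases isUnit_add_split (show IsUnit ((a + u) + (-a)) by simpa using hu) with h | h
  · exact h
  · exact absurd (by simpa using h.neg) ha

end RingLemmas

section CatLemmas

lemma isZero_of_retract {A B : C} (s : B ⟶ A) (r : A ⟶ B) (h : s ≫ r = 𝟙 B)
    (hA : IsZero A) : IsZero B := by
  rw [IsZero.iff_id_eq_zero, ← h, hA.eq_of_tgt s 0, zero_comp]

lemma retract_of_summand {A B : C} (h : IsSummand A B) :
    ∃ (s : B ⟶ A) (r : A ⟶ B), s ≫ r = 𝟙 B := by
  obtain ⟨A'', ⟨g⟩⟩ := h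
  exact ⟨biprod.inl ≫ g.inv, g.hom ≫ biprod.fst, by simp⟩

lemma summand_trans {A B Y : C} (h1 : IsSummand A B) (h2 : IsSummand B Y) : IsSummand A Y := by
  obtain ⟨W, ⟨g1⟩⟩ := h1
  obtain ⟨Z, ⟨g2⟩⟩ := h2
  exact ⟨Z ⊞ W, ⟨g1 ≪≫ biprod.mapIso g2 (Iso.refl W) ≪≫ biprod.associator Y Z W⟩⟩

lemma isZero_biproduct_of_isEmpty {ι : Type} [Fintype ι] [IsEmpty ι] (X : ι → C) :
    IsZero (⨁ X) := by
  rw [IsZero.iff_id_eq_zero, ← biproduct.total]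
  simp

noncomputable def biproductSumIso {J K : Type} [Fintype J] [Fintype K] [DecidableEq J]
    [DecidableEq K] (Z : J → C) (W : K → C) :
    (⨁ Sum.elim Z W) ≅ (⨁ Z) ⊞ (⨁ W) where
  hom := biprod.lift (biproduct.lift fun j => biproduct.π (Sum.elim Z W) (Sum.inl j))
                     (biproduct.lift fun k => biproduct.π (Sum.elim Z W) (Sum.inr k))
  inv := biprod.desc (biproduct.desc fun j => biproduct.ι (Sum.elim Z W) (Sum.inl j))
                     (biproduct.desc fun k => biproduct.ι (Sum.elim Z W) (Sum.inr k))
  hom_inv_id := by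
    erw [biprod.lift_desc, biproduct.lift_desc, biproduct.lift_desc, ← biproduct.total,
      Fintype.sum_sum_type]
    rfl
  inv_hom_id := by
    ext x y
    all_goals simp [biproduct.ι_π]
    all_goals erw [biproduct.ι_desc_assoc, biproduct.lift_π, biproduct.ι_π]
    · by_cases h : x = y
      · subst h; simp; rfl
      · rw [dif_neg h, dif_neg (fun e => h (Sum.inl_injective e))]; rfl
    · rfl
    · rfl
    · by_cases h : x = y
      · subst h; simp; rfl
      · rw [dif_neg h, dif_neg (fun e => h (Sum.inr_injective e))]; rfl

noncomputable def biproductSplit {ι : Type} [Fintype ι] [DecidableEq ι] (X : ι → C)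
    (p : ι → Prop) [DecidablePred p] :
    (⨁ X) ≅ (⨁ fun j : {i // p i} => X j.1) ⊞ (⨁ fun k : {i // ¬ p i} => X k.1) :=
  (biproduct.whiskerEquiv (Equiv.sumCompl p).symm (fun i => eqToIso (by
      by_cases h : p i
      · rw [Equiv.sumCompl_symm_apply_of_pos (p := p) h]; rfl
      · rw [Equiv.sumCompl_symm_apply_of_neg (p := p) h]; rfl))) ≪≫
    biproductSumIso _ _

noncomputable def biproductSingleton {ι : Type} [Fintype ι] [DecidableEq ι] (X : ι → C)
    (i0 : ι) : (⨁ fun j : {i // i = i0} => X j.1) ≅ X i0 where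
  hom := biproduct.π (fun j : {i // i = i0} => X j.1) ⟨i0, rfl⟩
  inv := biproduct.ι (fun j : {i // i = i0} => X j.1) ⟨i0, rfl⟩
  hom_inv_id := by
    apply biproduct.hom_ext'
    rintro ⟨j, rfl⟩
    simp [biproduct.ι_π]
  inv_hom_id := biproduct.ι_π_self _ _

lemma summand_biproduct {ι : Type} [Fintype ι] [DecidableEq ι] (X : ι → C) (A : C)
    (e : A ≅ ⨁ X) (i0 : ι) : IsSummand A (X i0) := by
  classical
  exact ⟨⨁ fun k : {i // ¬ i = i0} => X k.1, ⟨e ≪≫ biproductSplit X (fun i => i = i0) ≪≫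
    biprod.mapIso (biproductSingleton X i0) (Iso.refl _)⟩⟩

lemma exchange {ι : Type} [Fintype ι] [DecidableEq ι] (X : ι → C)
    (hX : ∀ i, IsIndecomposable (X i) ∧ IsLocalRing (End (X i)))
    (Y : C) (hY : ¬ IsZero Y) (hloc : IsLocalRing (End Y))
    (s : Y ⟶ ⨁ X) (r : ⨁ X ⟶ Y) (hsr : s ≫ r = 𝟙 Y) :
    ∃ i, Nonempty (Y ≅ X i) := by
  haveI := hloc
  let φ : ι → End Y := fun i => s ≫ biproduct.π X i ≫ biproduct.ι X i ≫ r
  have hm : (∑ i : ι, (s ≫ biproduct.π X i ≫ biproduct.ι X i ≫ r : Y ⟶ Y)) = 𝟙 Y := by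
    calc (∑ i : ι, s ≫ biproduct.π X i ≫ biproduct.ι X i ≫ r)
        = s ≫ (∑ i : ι, biproduct.π X i ≫ biproduct.ι X i) ≫ r := by
          rw [Preadditive.sum_comp, Preadditive.comp_sum]
          simp [Category.assoc]
      _ = 𝟙 Y := by rw [biproduct.total]; simpa using hsr
  have h1 : (∑ i : ι, φ i) = 1 := hm
  obtain ⟨i, -, hi⟩ := isUnit_sum Finset.univ φ (by rw [h1]; exact isUnit_one)
  refine ⟨i, ?_⟩
  obtain ⟨w, hw⟩ := hi
  have hv1 : ((s ≫ biproduct.π X i ≫ biproduct.ι X i ≫ r : Y ⟶ Y)) ≫ (↑w⁻¹ : End Y) = 𝟙 Y := by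
    have h' := w.inv_mul
    rw [End.mul_def, hw] at h'
    exact h'
  have hv2 : (↑w⁻¹ : End Y) ≫ ((s ≫ biproduct.π X i ≫ biproduct.ι X i ≫ r : Y ⟶ Y)) = 𝟙 Y := by
    have h' := w.mul_inv
    rw [End.mul_def, hw] at h'
    exact h'
  set v : Y ⟶ Y := (↑w⁻¹ : End Y) with hv
  set f : Y ⟶ X i := v ≫ s ≫ biproduct.π X i with hf
  set g : X i ⟶ Y := biproduct.ι X i ≫ r with hg
  have hfg : f ≫ g = 𝟙 Y := by
    rw [hf, hg]
    simpa [Category.assoc] using hv2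
  set e : X i ⟶ X i := g ≫ f with he
  have hee : e ≫ e = e := by
    rw [he, show (g ≫ f) ≫ g ≫ f = g ≫ (f ≫ g) ≫ f by simp only [Category.assoc], hfg,
      Category.id_comp]
  haveI := (hX i).2
  let e' : End (X i) := e
  have hring : e' * e' = e' := hee
  rcases idem hring with h0 | h1'
  · exfalso
    apply hY
    have hid : f ≫ e ≫ g = 𝟙 Y := by
      rw [he, show f ≫ (g ≫ f) ≫ g = (f ≫ g) ≫ (f ≫ g) by simp only [Category.assoc], hfg]
      simp
    have h0' : e = (0 : X i ⟶ X i) := h0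
    rw [IsZero.iff_id_eq_zero, ← hid, h0']
    simp
  · exact ⟨⟨f, g, hfg, h1'⟩⟩

lemma unipotent_aux {P : C} (x : P ⟶ P) (hx : x ≫ x = 0) :
    (𝟙 P + x) ≫ (𝟙 P - x) = 𝟙 P ∧ (𝟙 P - x) ≫ (𝟙 P + x) = 𝟙 P := by
  constructor <;>
  · simp only [Preadditive.comp_sub, Preadditive.comp_add, Preadditive.add_comp,
      Preadditive.sub_comp, Category.comp_id, Category.id_comp, hx]
    abel

lemma cancel {Z A B : C} (hloc : IsLocalRing (End Z)) (e : Z ⊞ A ≅ Z ⊞ B) :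
    Nonempty (A ≅ B) := by
  classical
  haveI := hloc
  have inv_of : ∀ (h : Z ⊞ A ≅ Z ⊞ B),
      IsUnit (show End Z from biprod.inl ≫ h.hom ≫ biprod.fst) →
      ∃ ainv : Z ⟶ Z, (biprod.inl ≫ h.hom ≫ biprod.fst) ≫ ainv = 𝟙 Z ∧
        ainv ≫ (biprod.inl ≫ h.hom ≫ biprod.fst) = 𝟙 Z := by
    intro h hu
    obtain ⟨w, hw⟩ := hu
    refine ⟨(↑w⁻¹ : End Z), ?_, ?_⟩
    · have h' := w.inv_mul
      rw [End.mul_def, hw] at h'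
      exact h'
    · have h' := w.mul_inv
      rw [End.mul_def, hw] at h'
      exact h'
  obtain ⟨h, ainv, ha1, ha2⟩ : ∃ (h : Z ⊞ A ≅ Z ⊞ B) (ainv : Z ⟶ Z),
      (biprod.inl ≫ h.hom ≫ biprod.fst) ≫ ainv = 𝟙 Z ∧
      ainv ≫ (biprod.inl ≫ h.hom ≫ biprod.fst) = 𝟙 Z := by
    by_cases ha : IsUnit (show End Z from biprod.inl ≫ e.hom ≫ biprod.fst)
    · obtain ⟨ainv, h1, h2⟩ := inv_of e ha
      exact ⟨e, ainv, h1, h2⟩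
    · have hsum : (show End Z from
          biprod.inl ≫ e.hom ≫ biprod.fst ≫ biprod.inl ≫ e.inv ≫ biprod.fst)
          + (show End Z from
          biprod.inl ≫ e.hom ≫ biprod.snd ≫ biprod.inr ≫ e.inv ≫ biprod.fst) = 1 := by
        show biprod.inl ≫ e.hom ≫ biprod.fst ≫ biprod.inl ≫ e.inv ≫ biprod.fst
          + biprod.inl ≫ e.hom ≫ biprod.snd ≫ biprod.inr ≫ e.inv ≫ biprod.fst = 𝟙 Z
        have ht : biprod.inl ≫ e.hom ≫ ((biprod.fst ≫ biprod.inl + biprod.snd ≫ biprod.inr) ≫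
            (e.inv ≫ biprod.fst)) = 𝟙 Z := by
          rw [biprod.total]
          simp
        simpa only [Preadditive.add_comp, Preadditive.comp_add, Category.assoc] using ht
      rcases isUnit_add_split (show IsUnit _ by rw [hsum]; exact isUnit_one) with h1 | h2
      · exfalso
        apply ha
        have hfac : (show End Z from biprod.inl ≫ e.inv ≫ biprod.fst) *
            (show End Z from biprod.inl ≫ e.hom ≫ biprod.fst) =
            (show End Z from
              biprod.inl ≫ e.hom ≫ biprod.fst ≫ biprod.inl ≫ e.inv ≫ biprod.fst) := by
          show (biprod.inl ≫ e.hom ≫ biprod.fst) ≫ (biprod.inl ≫ e.inv ≫ biprod.fst) = _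
          simp only [Category.assoc]
        exact (isUnit_of_isUnit_mul (by rw [hfac]; exact h1)).2
      · -- twist e by an elementary automorphism of Z ⊞ B
        set x : Z ⊞ B ⟶ Z ⊞ B :=
          biprod.snd ≫ (biprod.inr ≫ e.inv ≫ biprod.fst) ≫ biprod.inl with hx
        have hxx : x ≫ x = 0 := by
          simp [hx]
        obtain ⟨hu1, hu2⟩ := unipotent_aux x hxx
        have hcor : (show End Z from biprod.inl ≫ (e.hom ≫ (𝟙 _ + x)) ≫ biprod.fst) =
            (show End Z from biprod.inl ≫ e.hom ≫ biprod.fst)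
            + (show End Z from
              biprod.inl ≫ e.hom ≫ biprod.snd ≫ biprod.inr ≫ e.inv ≫ biprod.fst) := by
          show biprod.inl ≫ (e.hom ≫ (𝟙 _ + x)) ≫ biprod.fst = _
          rw [hx]
          simp [Preadditive.comp_add, Preadditive.add_comp]
        have hunit : IsUnit (show End Z from
            biprod.inl ≫ (e.hom ≫ (𝟙 _ + x)) ≫ biprod.fst) := by
          rw [hcor]
          exact isUnit_add_of_nonunit h2 ha
        obtain ⟨ainv, hh1, hh2⟩ := inv_of (e ≪≫ ⟨𝟙 _ + x, 𝟙 _ - x, hu1, hu2⟩) hunit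
        exact ⟨e ≪≫ ⟨𝟙 _ + x, 𝟙 _ - x, hu1, hu2⟩, ainv, hh1, hh2⟩
  -- Step 2: diagonalize
  have ha1' : ∀ {W : C} (q : Z ⟶ W), biprod.inl ≫ h.hom ≫ biprod.fst ≫ ainv ≫ q = q := by
    intro W q
    rw [show biprod.inl ≫ h.hom ≫ biprod.fst ≫ ainv ≫ q =
      ((biprod.inl ≫ h.hom ≫ biprod.fst) ≫ ainv) ≫ q by simp only [Category.assoc], ha1,
      Category.id_comp]
  have ha2' : ∀ {W : C} (q : W ⟶ Z), q ≫ ainv ≫ biprod.inl ≫ h.hom ≫ biprod.fst = q := by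
    intro W q
    rw [show q ≫ ainv ≫ biprod.inl ≫ h.hom ≫ biprod.fst =
      q ≫ (ainv ≫ (biprod.inl ≫ h.hom ≫ biprod.fst)) by simp only [Category.assoc], ha2,
      Category.comp_id]
  set xL : Z ⊞ A ⟶ Z ⊞ A :=
    biprod.snd ≫ (biprod.inr ≫ h.hom ≫ biprod.fst) ≫ ainv ≫ biprod.inl with hxL
  set xR : Z ⊞ B ⟶ Z ⊞ B :=
    biprod.fst ≫ ainv ≫ (biprod.inl ≫ h.hom ≫ biprod.snd) ≫ biprod.inr with hxR
  have hxxL : xL ≫ xL = 0 := by simp [hxL]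
  have hxxR : xR ≫ xR = 0 := by simp [hxR]
  obtain ⟨hL1, hL2⟩ := unipotent_aux xL hxxL
  obtain ⟨hR1, hR2⟩ := unipotent_aux xR hxxR
  set ghom : Z ⊞ A ⟶ Z ⊞ B := (𝟙 _ - xL) ≫ h.hom ≫ (𝟙 _ - xR) with hghom
  set ginv : Z ⊞ B ⟶ Z ⊞ A := (𝟙 _ + xR) ≫ h.inv ≫ (𝟙 _ + xL) with hginv
  have hgh : ghom ≫ ginv = 𝟙 _ := by
    rw [hghom, hginv]
    calc ((𝟙 _ - xL) ≫ h.hom ≫ (𝟙 _ - xR)) ≫ ((𝟙 _ + xR) ≫ h.inv ≫ (𝟙 _ + xL))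
        = (𝟙 _ - xL) ≫ h.hom ≫ ((𝟙 _ - xR) ≫ (𝟙 _ + xR)) ≫ h.inv ≫ (𝟙 _ + xL) := by
          simp only [Category.assoc]
      _ = 𝟙 _ := by
          rw [hR2, Category.id_comp, Iso.hom_inv_id_assoc, hL2]
  have hgi : ginv ≫ ghom = 𝟙 _ := by
    rw [hghom, hginv]
    calc ((𝟙 _ + xR) ≫ h.inv ≫ (𝟙 _ + xL)) ≫ ((𝟙 _ - xL) ≫ h.hom ≫ (𝟙 _ - xR))
        = (𝟙 _ + xR) ≫ h.inv ≫ ((𝟙 _ + xL) ≫ (𝟙 _ - xL)) ≫ h.hom ≫ (𝟙 _ - xR) := by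
          simp only [Category.assoc]
      _ = 𝟙 _ := by
          rw [hL1, Category.id_comp, Iso.inv_hom_id_assoc, hR1]
  have hz1 : biprod.inr ≫ ghom ≫ biprod.fst = 0 := by
    rw [hghom, hxL, hxR]
    simp [Preadditive.sub_comp, Preadditive.comp_sub, ha2']
  have hz2 : biprod.inl ≫ ghom ≫ biprod.snd = 0 := by
    rw [hghom, hxL, hxR]
    simp [Preadditive.sub_comp, Preadditive.comp_sub, ha1']
  have hz1' : ∀ {W : C} (q : Z ⟶ W), biprod.inr ≫ ghom ≫ biprod.fst ≫ q = 0 := by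
    intro W q
    rw [show biprod.inr ≫ ghom ≫ biprod.fst ≫ q = (biprod.inr ≫ ghom ≫ biprod.fst) ≫ q by
      simp only [Category.assoc], hz1, zero_comp]
  refine ⟨⟨biprod.inr ≫ ghom ≫ biprod.snd, biprod.inr ≫ ginv ≫ biprod.snd, ?_, ?_⟩⟩
  · have exp2 : biprod.inr ≫ ghom ≫ (biprod.fst ≫ biprod.inl + biprod.snd ≫ biprod.inr) ≫
        ginv ≫ biprod.snd
        = (biprod.inr ≫ ghom ≫ biprod.snd) ≫ (biprod.inr ≫ ginv ≫ biprod.snd) := by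
      simp only [Preadditive.comp_add, Preadditive.add_comp, Category.assoc]
      rw [hz1', zero_add]
    rw [← exp2, biprod.total, Category.id_comp,
      show ghom ≫ ginv ≫ biprod.snd = (ghom ≫ ginv) ≫ biprod.snd from
        (Category.assoc _ _ _).symm, hgh]
    simp
  · have exp2 : biprod.inr ≫ ginv ≫ (biprod.fst ≫ biprod.inl + biprod.snd ≫ biprod.inr) ≫
        ghom ≫ biprod.snd
        = (biprod.inr ≫ ginv ≫ biprod.snd) ≫ (biprod.inr ≫ ghom ≫ biprod.snd) := by
      simp only [Preadditive.comp_add, Preadditive.add_comp, Category.assoc]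
      rw [show biprod.inr ≫ ginv ≫ biprod.fst ≫ biprod.inl ≫ ghom ≫ biprod.snd =
        (biprod.inr ≫ ginv ≫ biprod.fst) ≫ (biprod.inl ≫ ghom ≫ biprod.snd) by
          simp only [Category.assoc], hz2, comp_zero, zero_add]
    rw [← exp2, biprod.total, Category.id_comp,
      show ginv ≫ ghom ≫ biprod.snd = (ginv ≫ ghom) ≫ biprod.snd from
        (Category.assoc _ _ _).symm, hgi]
    simp

lemma ks_unique : ∀ (n : ℕ) {ι κ : Type} [Fintype ι] [Fintype κ] [DecidableEq ι] [DecidableEq κ],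
    Fintype.card ι = n → ∀ (X : ι → C) (Y : κ → C),
    (∀ i, IsIndecomposable (X i) ∧ IsLocalRing (End (X i))) →
    (∀ k, IsIndecomposable (Y k) ∧ IsLocalRing (End (Y k))) →
    (⨁ X ≅ ⨁ Y) → ∃ σ : ι ≃ κ, ∀ i, Nonempty (X i ≅ Y (σ i)) := by
  intro n
  induction n with
  | zero =>
      intro ι κ _ _ _ _ hcard X Y hX hY e
      haveI : IsEmpty ι := Fintype.card_eq_zero_iff.mp hcard
      have hzX : IsZero (⨁ X) := isZero_biproduct_of_isEmpty X
      have hzY : IsZero (⨁ Y) := hzX.of_iso e.symm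
      haveI : IsEmpty κ := ⟨fun k => (hY k).1.1 (isZero_of_retract (biproduct.ι Y k)
        (biproduct.π Y k) (by simp) hzY)⟩
      exact ⟨Equiv.equivOfIsEmpty ι κ, fun i => isEmptyElim i⟩
  | succ n ih =>
      intro ι κ _ _ _ _ hcard X Y hX hY e
      haveI : Nonempty ι := Fintype.card_pos_iff.mp (by omega)
      obtain ⟨i0⟩ := ‹Nonempty ι›
      obtain ⟨k0, ⟨φ⟩⟩ := exchange Y hY (X i0) (hX i0).1.1 (hX i0).2
        (biproduct.ι X i0 ≫ e.hom) (e.inv ≫ biproduct.π X i0) (by simp)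
      set X' : {i // ¬ i = i0} → C := fun j => X j.1 with hX'
      set Y' : {k // ¬ k = k0} → C := fun j => Y j.1 with hY'
      have splitX : (⨁ X) ≅ X i0 ⊞ (⨁ X') :=
        biproductSplit X (fun i => i = i0) ≪≫
          biprod.mapIso (biproductSingleton X i0) (Iso.refl _)
      have splitY : (⨁ Y) ≅ Y k0 ⊞ (⨁ Y') :=
        biproductSplit Y (fun k => k = k0) ≪≫
          biprod.mapIso (biproductSingleton Y k0) (Iso.refl _)
      have comb : X i0 ⊞ (⨁ X') ≅ X i0 ⊞ (⨁ Y') :=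
        splitX.symm ≪≫ e ≪≫ splitY ≪≫ biprod.mapIso φ.symm (Iso.refl _)
      obtain ⟨ψ⟩ := cancel (hX i0).2 comb
      have hcard' : Fintype.card {i // ¬ i = i0} = n := by
        have h1 := Fintype.card_subtype_compl (fun i : ι => i = i0)
        rw [Fintype.card_subtype_eq i0] at h1
        omega
      obtain ⟨σ', hσ'⟩ := ih hcard' X' Y' (fun j => hX j.1) (fun j => hY j.1) ψ
      let σ1 : {i : ι // i = i0} ≃ {k : κ // k = k0} :=
        ⟨fun _ => ⟨k0, rfl⟩, fun _ => ⟨i0, rfl⟩, by rintro ⟨a, rfl⟩; rfl, by rintro ⟨b, rfl⟩; rfl⟩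
      refine ⟨(Equiv.sumCompl (· = i0)).symm.trans ((Equiv.sumCongr σ1 σ').trans
        (Equiv.sumCompl (· = k0))), fun i => ?_⟩
      by_cases hii : i = i0
      · subst hii
        show Nonempty (X i ≅ Y ((Equiv.sumCompl (· = k0))
          ((Equiv.sumCongr σ1 σ') ((Equiv.sumCompl (· = i)).symm i))))
        rw [Equiv.sumCompl_symm_apply_of_pos (p := fun x => x = i) (a := i) rfl, Equiv.sumCongr_apply, Sum.map_inl,
          Equiv.sumCompl_apply_inl]
        exact ⟨φ⟩
      · show Nonempty (X i ≅ Y ((Equiv.sumCompl (· = k0))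
          ((Equiv.sumCongr σ1 σ') ((Equiv.sumCompl (· = i0)).symm i))))
        rw [Equiv.sumCompl_symm_apply_of_neg (p := fun x => x = i0) hii, Equiv.sumCongr_apply, Sum.map_inr,
          Equiv.sumCompl_apply_inr]
        exact hσ' ⟨i, hii⟩

lemma exists_indec_summand (hC : IsKrullSchmidtCat C) (A : C) (hA : ¬ IsZero A) :
    ∃ Y : C, IsIndecomposable Y ∧ IsLocalRing (End Y) ∧ IsSummand A Y := by
  obtain ⟨n, Y, hY, ⟨e⟩⟩ := hC A
  rcases Nat.eq_zero_or_pos n with rfl | hn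
  · exact absurd ((isZero_biproduct_of_isEmpty Y).of_iso e) hA
  · exact ⟨Y ⟨0, hn⟩, (hY _).1, (hY _).2, summand_biproduct Y A e ⟨0, hn⟩⟩

lemma indec_iso_local (hC : IsKrullSchmidtCat C) (X : C) (hX : IsIndecomposable X) :
    ∃ Y : C, IsIndecomposable Y ∧ IsLocalRing (End Y) ∧ Nonempty (X ≅ Y) := by
  obtain ⟨Y, hind, hloc, hsum⟩ := exists_indec_summand hC X hX.1
  obtain ⟨Zz, ⟨g⟩⟩ := hsum
  rcases hX.2 Y Zz ⟨g⟩ with h | h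
  · exact absurd h hind.1
  · exact ⟨Y, hind, hloc, ⟨g ≪≫ (isoBiprodZero h).symm⟩⟩

lemma uniq_part (hC : IsKrullSchmidtCat C) (F : C ⥤ D) [F.Additive]
    {ι : Type} [Fintype ι] [DecidableEq ι]
    (X : ι → C) (hX : ∀ i, IsIndecomposable (X i) ∧ IsLocalRing (End (X i)))
    (A B_F B_0 : C) (eA : A ≅ ⨁ X) (eB : A ≅ B_F ⊞ B_0)
    (hdense : IsFDense F B_F)
    (hkill : ∀ Xx : C, IsIndecomposable Xx → IsSummand B_0 Xx → IsZero (F.obj Xx)) :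
    Nonempty (B_F ≅ ⨁ fun j : {i // ¬ IsZero (F.obj (X i))} => X j.1) := by
  classical
  obtain ⟨m, Zf, hZ, ⟨eZ⟩⟩ := hC B_F
  obtain ⟨l, W, hW, ⟨eW⟩⟩ := hC B_0
  have hZne : ∀ j, ¬ IsZero (F.obj (Zf j)) := fun j =>
    hdense (Zf j) (summand_biproduct Zf B_F eZ j) (hZ j).1.1
  have hWz : ∀ k, IsZero (F.obj (W k)) := fun k =>
    hkill (W k) (hW k).1 (summand_biproduct W B_0 eW k)
  have hUprop : ∀ x, IsIndecomposable (Sum.elim Zf W x) ∧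
      IsLocalRing (End (Sum.elim Zf W x)) := by
    rintro (j | k)
    · exact hZ j
    · exact hW k
  have big : (⨁ Sum.elim Zf W) ≅ ⨁ X :=
    biproductSumIso Zf W ≪≫ biprod.mapIso eZ.symm eW.symm ≪≫ eB.symm ≪≫ eA
  obtain ⟨σ, hσ⟩ := ks_unique (Fintype.card (Fin m ⊕ Fin l)) rfl (Sum.elim Zf W) X hUprop hX big
  have hp : ∀ j : Fin m, ¬ IsZero (F.obj (X (σ (Sum.inl j)))) := by
    intro j hz
    obtain ⟨is⟩ := hσ (Sum.inl j)
    exact hZne j (hz.of_iso (F.mapIso is))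
  have hq : ∀ k : Fin l, IsZero (F.obj (X (σ (Sum.inr k)))) := by
    intro k
    obtain ⟨is⟩ := hσ (Sum.inr k)
    exact (hWz k).of_iso (F.mapIso is).symm
  have hbij : Function.Bijective (fun j : Fin m =>
      (⟨σ (Sum.inl j), hp j⟩ : {i // ¬ IsZero (F.obj (X i))})) := by
    constructor
    · intro j1 j2 hj
      have h2 : σ (Sum.inl j1) = σ (Sum.inl j2) := congrArg Subtype.val hj
      exact Sum.inl_injective (σ.injective h2)
    · rintro ⟨i, hi⟩
      rcases hx : σ.symm i with j | k
      · exact ⟨j, Subtype.ext (show σ (Sum.inl j) = i by rw [← hx, Equiv.apply_symm_apply])⟩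
      · exfalso
        apply hi
        have hik : σ (Sum.inr k) = i := by rw [← hx, Equiv.apply_symm_apply]
        rw [← hik]
        exact hq k
  have wiso : ∀ j : Fin m,
      X ((Equiv.ofBijective _ hbij j) : {i // ¬ IsZero (F.obj (X i))}).1 ≅ Zf j := fun j =>
    (Classical.choice (hσ (Sum.inl j))).symm
  exact ⟨eZ ≪≫ biproduct.whiskerEquiv (Equiv.ofBijective _ hbij) wiso⟩

end CatLemmas
end KSaux

/-- Every object `A` of a Krull–Schmidt category admits a decomposition `A ≅ A_F ⊞ A_0`
where `A_F` is `F`-dense and every indecomposable summand of `A_0` is killed by `F`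
(so `A_F` is a maximal `F`-dense summand); moreover `A_F` is unique up to isomorphism. -/
theorem statement1
    (hC : IsKrullSchmidtCat C) (hD : IsKrullSchmidtCat D)
    (F : C ⥤ D) [F.Additive] (hF : IsKrullSchmidtFunctor F) (A : C) :
    ∃ (A_F A_0 : C) (_ : A ≅ A_F ⊞ A_0),
      IsFDense F A_F ∧
      (∀ X : C, IsIndecomposable X → IsSummand A_0 X → IsZero (F.obj X)) ∧
      ∀ (B_F B_0 : C), (A ≅ B_F ⊞ B_0) → IsFDense F B_F →
        (∀ X : C, IsIndecomposable X → IsSummand B_0 X → IsZero (F.obj X)) →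
        Nonempty (A_F ≅ B_F) := by
  classical
  obtain ⟨n, X, hX, ⟨eA⟩⟩ := hC A
  refine ⟨⨁ (fun j : {i // ¬ IsZero (F.obj (X i))} => X j.1),
    ⨁ (fun k : {i // ¬ ¬ IsZero (F.obj (X i))} => X k.1),
    eA ≪≫ KSaux.biproductSplit X (fun i => ¬ IsZero (F.obj (X i))), ?_, ?_, ?_⟩
  · intro A' hsum hA' hzero
    obtain ⟨Y, hind, hloc, hsumY⟩ := KSaux.exists_indec_summand hC A' hA'
    obtain ⟨s, r, hsr⟩ := KSaux.retract_of_summand (KSaux.summand_trans hsum hsumY)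
    obtain ⟨j, ⟨is⟩⟩ := KSaux.exchange (fun j : {i // ¬ IsZero (F.obj (X i))} => X j.1)
      (fun j => hX j.1) Y hind.1 hloc s r hsr
    obtain ⟨s', r', hsr'⟩ := KSaux.retract_of_summand hsumY
    have hz : IsZero (F.obj Y) := KSaux.isZero_of_retract (F.map s') (F.map r')
      (by rw [← F.map_comp, hsr', F.map_id]) hzero
    exact j.2 (hz.of_iso (F.mapIso is).symm)
  · intro Xx hind hsum
    obtain ⟨Y, hindY, hlocY, ⟨isoXY⟩⟩ := KSaux.indec_iso_local hC Xx hind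
    obtain ⟨sX, rX, hsrX⟩ := KSaux.retract_of_summand hsum
    obtain ⟨k, ⟨isk⟩⟩ := KSaux.exchange (fun k : {i // ¬ ¬ IsZero (F.obj (X i))} => X k.1)
      (fun k => hX k.1) Y hindY.1 hlocY (isoXY.inv ≫ sX) (rX ≫ isoXY.hom)
      (by rw [show (isoXY.inv ≫ sX) ≫ rX ≫ isoXY.hom =
        isoXY.inv ≫ (sX ≫ rX) ≫ isoXY.hom by simp only [Category.assoc], hsrX]; simp)
    exact (not_not.mp k.2).of_iso (F.mapIso (isoXY ≪≫ isk))
  · intro B_F B_0 eB hdense hkill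
    obtain ⟨isoB⟩ := KSaux.uniq_part hC F X hX A B_F B_0 eA eB hdense hkill
    exact ⟨isoB.symm⟩
end
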